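/- Let (Ω, 𝔽, P) be a probability space, X : Ω → ℕ integrable, (Y_i)_{i∈ℕ} an i.i.d. sequence of integrable real random variables with common mean a, and W an integrable real random variable with mean μ_W, such that X, the sequence (Y_i), and W are mutually independent. Then the conditional expectation of S = ∑_{i<X} Y_i + W given the σ-algebra generated by X satisfies E[S | σ(X)] = a·X + μ_W almost surely. -/

import Mathlib

open MeasureTheory ProbabilityTheory

lemma indicator_mul_integral {Ω : Type*} {m0 m' : MeasurableSpace Ω}
    [mΩ : MeasurableSpace Ω]
    (P : Measure Ω) [IsProbabilityMeasure P] (hm0 : m0 ≤ mΩ)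
    (hInd : Indep m0 m' P) {A : Set Ω} (hA : MeasurableSet[m0] A)
    {f : Ω → ℝ} (hf : Measurable[m'] f) (hfi : Integrable f P) :
    ∫ ω, A.indicator f ω ∂P = (P A).toReal * ∫ ω, f ω ∂P := by
  have hAm : MeasurableSet[mΩ] A := hm0 _ hA
  have h1 : Measurable[m0] (A.indicator (fun _ => (1:ℝ))) :=
    measurable_const.indicator hA
  have hif : IndepFun (A.indicator (fun _ => (1:ℝ))) f P :=
    indep_of_indep_of_le_right (indep_of_indep_of_le_left hInd h1.comap_le) hf.comap_le
  have heq : (fun ω => A.indicator f ω)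
      = (A.indicator (fun _ => (1:ℝ))) * f := by
    funext ω; by_cases h : ω ∈ A <;> simp [Set.indicator, h]
  have hmul : ∫ ω, ((A.indicator (fun _ => (1:ℝ))) * f) ω ∂P
      = (∫ ω, A.indicator (fun _ => (1:ℝ)) ω ∂P) * ∫ ω, f ω ∂P :=
    IndepFun.integral_mul_eq_mul_integral hif ((h1.mono hm0 le_rfl).aestronglyMeasurable) hfi.1
  have hone : ∫ ω, A.indicator (fun _ => (1:ℝ)) ω ∂P = (P A).toReal :=
    integral_indicator_one hAm
  rw [heq, hmul, hone]

/-- Conditional mean of the INAR(1) one-step evolution: with `X : Ω → ℕ` integrable,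
`(Y i)` i.i.d. integrable with common mean `a`, `W` integrable with mean `μW`, and
`X`, `(Y i)_{i}`, `W` mutually independent, the conditional expectation of
`S = ∑_{i<X} Y i + W` given `σ(X)` is `a·X + μW` almost surely. -/
theorem compound_sum_condexp_mean {Ω : Type*} [MeasurableSpace Ω]
    (P : Measure Ω) [IsProbabilityMeasure P]
    (X : Ω → ℕ) (Y : ℕ → Ω → ℝ) (W : Ω → ℝ) (a μW : ℝ)
    (hXmeas : Measurable X)
    (hXint : Integrable (fun ω => (X ω : ℝ)) P)
    (hYmeas : ∀ i, Measurable (Y i))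
    (hYint : ∀ i, Integrable (Y i) P)
    (hYiid : iIndepFun Y P)
    (hYident : ∀ i, IdentDistrib (Y i) (Y 0) P P)
    (hYmean : ∀ i, ∫ ω, Y i ω ∂P = a)
    (hWmeas : Measurable W)
    (hWint : Integrable W P)
    (hWmean : ∫ ω, W ω ∂P = μW)
    (hindep : iIndep
      ![MeasurableSpace.comap X ⊤,
        ⨆ i, MeasurableSpace.comap (Y i) inferInstance,
        MeasurableSpace.comap W inferInstance] P) :
    P[fun ω => (∑ i ∈ Finset.range (X ω), Y i ω) + W ω | MeasurableSpace.comap X ⊤]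
      =ᵐ[P] fun ω => a * (X ω : ℝ) + μW := by
  set c : ℝ := ∫ ω, |Y 0 ω| ∂P with hc
  have hm0 : MeasurableSpace.comap X ⊤ ≤ ‹MeasurableSpace Ω› := by
    rintro s ⟨t, -, rfl⟩
    exact hXmeas (t.to_countable.measurableSet)
  have hIndY : Indep (MeasurableSpace.comap X ⊤)
      (⨆ i, MeasurableSpace.comap (Y i) inferInstance) P := by
    have h := hindep.indep (show (0 : Fin 3) ≠ 1 by decide)
    simpa using h
  have hIndW : Indep (MeasurableSpace.comap X ⊤)
      (MeasurableSpace.comap W inferInstance) P := by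
    have h := hindep.indep (show (0 : Fin 3) ≠ 2 by decide)
    simpa using h
  have hYm1 : ∀ i, Measurable[⨆ i, MeasurableSpace.comap (Y i) inferInstance] (Y i) :=
    fun i => Measurable.of_comap_le
      (le_iSup (fun i => MeasurableSpace.comap (Y i) inferInstance) i)
  have hSnm1 : ∀ n, Measurable[⨆ i, MeasurableSpace.comap (Y i) inferInstance]
      (fun ω => ∑ i ∈ Finset.range n, Y i ω) :=
    fun n => Finset.measurable_sum _ (fun i _ => hYm1 i)
  have hSnabsm1 : ∀ n, Measurable[⨆ i, MeasurableSpace.comap (Y i) inferInstance]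
      (fun ω => |∑ i ∈ Finset.range n, Y i ω|) :=
    fun n => by
      have h := Measurable.comp (f := fun ω => ∑ i ∈ Finset.range n, Y i ω)
        measurable_norm (hSnm1 n)
      simpa [Function.comp_def, Real.norm_eq_abs] using h
  have hSnint : ∀ n, Integrable (fun ω => ∑ i ∈ Finset.range n, Y i ω) P :=
    fun n => integrable_finset_sum _ (fun i _ => hYint i)
  have hSnmean : ∀ n : ℕ, ∫ ω, (∑ i ∈ Finset.range n, Y i ω) ∂P = n * a := by
    intro n
    rw [integral_finset_sum _ (fun i _ => hYint i)]
    simp [hYmean, mul_comm]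
  have habsY : ∀ i, ∫ ω, |Y i ω| ∂P = c :=
    fun i => ((hYident i).comp measurable_abs).integral_eq
  have hc0 : 0 ≤ c := by rw [hc]; exact integral_nonneg fun ω => abs_nonneg _
  have hSnabs : ∀ n : ℕ, ∫ ω, |∑ i ∈ Finset.range n, Y i ω| ∂P ≤ n * c := by
    intro n
    calc ∫ ω, |∑ i ∈ Finset.range n, Y i ω| ∂P
        ≤ ∫ ω, (∑ i ∈ Finset.range n, |Y i ω|) ∂P := by
          refine integral_mono ((hSnint n).abs) (integrable_finset_sum _ fun i _ => (hYint i).abs)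
            (fun ω => Finset.abs_sum_le_sum_abs _ _)
      _ = ∑ i ∈ Finset.range n, ∫ ω, |Y i ω| ∂P :=
          integral_finset_sum _ (fun i _ => (hYint i).abs)
      _ = n * c := by simp [habsY, mul_comm]
  -- key identity: integral of indicator times partial sum
  have hkey : ∀ (n : ℕ) (u : Set ℕ),
      ∫ ω, (X ⁻¹' u).indicator (fun ω => ∑ i ∈ Finset.range n, Y i ω) ω ∂P
        = (P (X ⁻¹' u)).toReal * (n * a) := by
    intro n u
    rw [indicator_mul_integral P hm0 hIndY ⟨u, trivial, rfl⟩ (hSnm1 n) (hSnint n), hSnmean n]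
  have habskey : ∀ (n : ℕ) (u : Set ℕ),
      ∫ ω, (X ⁻¹' u).indicator (fun ω => |∑ i ∈ Finset.range n, Y i ω|) ω ∂P
        ≤ (P (X ⁻¹' u)).toReal * (n * c) := by
    intro n u
    rw [indicator_mul_integral P hm0 hIndY ⟨u, trivial, rfl⟩ (hSnabsm1 n) ((hSnint n).abs)]
    exact mul_le_mul_of_nonneg_left (hSnabs n) ENNReal.toReal_nonneg
  -- lintegral bound
  have hlkey : ∀ (n : ℕ) (u : Set ℕ),
      ∫⁻ ω, (X ⁻¹' u).indicator (fun ω => (‖∑ i ∈ Finset.range n, Y i ω‖₊ : ENNReal)) ω ∂P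
        ≤ P (X ⁻¹' u) * ENNReal.ofReal (n * c) := by
    intro n u
    have hmeasu : MeasurableSet (X ⁻¹' u) := hXmeas (u.to_countable.measurableSet)
    have hind_int : Integrable
        (fun ω => (X ⁻¹' u).indicator (fun ω => |∑ i ∈ Finset.range n, Y i ω|) ω) P :=
      ((hSnint n).abs).indicator hmeasu
    have hnn : 0 ≤ᵐ[P]
        (fun ω => (X ⁻¹' u).indicator (fun ω => |∑ i ∈ Finset.range n, Y i ω|) ω) :=
      Filter.Eventually.of_forall fun ω =>
        Set.indicator_nonneg (fun _ _ => abs_nonneg _) _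
    have hofr := ofReal_integral_eq_lintegral_ofReal hind_int hnn
    have hpt : ∀ ω, (X ⁻¹' u).indicator
          (fun ω => (‖∑ i ∈ Finset.range n, Y i ω‖₊ : ENNReal)) ω
        = ENNReal.ofReal
            ((X ⁻¹' u).indicator (fun ω => |∑ i ∈ Finset.range n, Y i ω|) ω) := by
      intro ω
      by_cases h : ω ∈ X ⁻¹' u <;>
        simp [Set.indicator, h, ← Real.norm_eq_abs, ofReal_norm, enorm_eq_nnnorm]
    calc ∫⁻ ω, (X ⁻¹' u).indicator
          (fun ω => (‖∑ i ∈ Finset.range n, Y i ω‖₊ : ENNReal)) ω ∂P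
        = ENNReal.ofReal (∫ ω, (X ⁻¹' u).indicator
            (fun ω => |∑ i ∈ Finset.range n, Y i ω|) ω ∂P) := by
          rw [lintegral_congr hpt, ← hofr]
      _ ≤ ENNReal.ofReal ((P (X ⁻¹' u)).toReal * (n * c)) :=
          ENNReal.ofReal_le_ofReal (habskey n u)
      _ = P (X ⁻¹' u) * ENNReal.ofReal (n * c) := by
          rw [ENNReal.ofReal_mul ENNReal.toReal_nonneg,
            ENNReal.ofReal_toReal (measure_ne_top P _)]
  -- finiteness of the dominating series
  have hXltop : ∑' n : ℕ, (n : ENNReal) * P (X ⁻¹' {n}) ≠ ⊤ := by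
    have h1 : ∑' n : ℕ, (n : ENNReal) * P (X ⁻¹' {n})
        = ∫⁻ n, (n : ENNReal) ∂(P.map X) := by
      rw [lintegral_countable' (fun n : ℕ => (n : ENNReal))]
      refine tsum_congr fun n => ?_
      rw [Measure.map_apply hXmeas (measurableSet_singleton n), mul_comm]
    rw [h1, lintegral_map (measurable_of_countable _) hXmeas]
    have h2 := hXint.2
    rw [hasFiniteIntegral_iff_norm] at h2
    refine ne_of_lt (lt_of_le_of_lt (le_of_eq ?_) h2)
    exact lintegral_congr fun ω => by
      simp [Real.norm_natCast, ENNReal.ofReal_natCast]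
  have hfin : ∀ r : ℝ,
      ∑' n : ℕ, P (X ⁻¹' {n}) * ENNReal.ofReal ((n : ℝ) * r) ≠ ⊤ := by
    intro r
    have hle : ∀ n : ℕ, P (X ⁻¹' {n}) * ENNReal.ofReal ((n : ℝ) * r)
        ≤ ((n : ENNReal) * P (X ⁻¹' {n})) * ENNReal.ofReal r := by
      intro n
      rw [ENNReal.ofReal_mul (by positivity), ENNReal.ofReal_natCast]
      exact le_of_eq (by ring)
    refine ne_top_of_le_ne_top ?_ (ENNReal.tsum_le_tsum hle)
    rw [ENNReal.tsum_mul_right]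
    exact ENNReal.mul_ne_top hXltop ENNReal.ofReal_ne_top
  -- integrability of the compound sum
  have hTmeas : Measurable (fun ω => ∑ i ∈ Finset.range (X ω), Y i ω) := by
    have h : Measurable (fun p : Ω × ℕ => ∑ i ∈ Finset.range p.2, Y i p.1) :=
      measurable_from_prod_countable_left fun n => by
        simpa using Finset.measurable_sum (Finset.range n) fun i _ => hYmeas i
    exact h.comp (measurable_id.prodMk hXmeas)
  have hnormmeas : ∀ (n : ℕ) (u : Set ℕ), Measurable fun ω =>
      (X ⁻¹' u).indicator (fun ω => (‖∑ i ∈ Finset.range n, Y i ω‖₊ : ENNReal)) ω :=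
    fun n u => Measurable.indicator
      ((Finset.measurable_sum _ fun i _ => hYmeas i).nnnorm.coe_nnreal_ennreal)
      (hXmeas (u.to_countable.measurableSet))
  have hTfin : HasFiniteIntegral (fun ω => ∑ i ∈ Finset.range (X ω), Y i ω) P := by
    show ∫⁻ ω, (‖∑ i ∈ Finset.range (X ω), Y i ω‖₊ : ENNReal) ∂P < ⊤
    have hpt : ∀ ω, (‖∑ i ∈ Finset.range (X ω), Y i ω‖₊ : ENNReal)
        = ∑' n : ℕ, (X ⁻¹' {n}).indicator
            (fun ω => (‖∑ i ∈ Finset.range n, Y i ω‖₊ : ENNReal)) ω := by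
      intro ω
      rw [tsum_eq_single (X ω) ?_]
      · simp [Set.indicator]
      · intro n hn
        have : ω ∉ X ⁻¹' ({n} : Set ℕ) := by simpa using (Ne.symm hn)
        simp [Set.indicator_of_notMem this]
    calc ∫⁻ ω, (‖∑ i ∈ Finset.range (X ω), Y i ω‖₊ : ENNReal) ∂P
        = ∫⁻ ω, ∑' n : ℕ, (X ⁻¹' {n}).indicator
            (fun ω => (‖∑ i ∈ Finset.range n, Y i ω‖₊ : ENNReal)) ω ∂P :=
          lintegral_congr hpt
      _ = ∑' n : ℕ, ∫⁻ ω, (X ⁻¹' {n}).indicator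
            (fun ω => (‖∑ i ∈ Finset.range n, Y i ω‖₊ : ENNReal)) ω ∂P :=
          lintegral_tsum fun n => (hnormmeas n {n}).aemeasurable
      _ ≤ ∑' n : ℕ, P (X ⁻¹' {n}) * ENNReal.ofReal ((n : ℝ) * c) :=
          ENNReal.tsum_le_tsum fun n => hlkey n {n}
      _ < ⊤ := lt_top_iff_ne_top.2 (hfin c)
  have hTint : Integrable (fun ω => ∑ i ∈ Finset.range (X ω), Y i ω) P :=
    ⟨hTmeas.aestronglyMeasurable, hTfin⟩
  have hSint : Integrable (fun ω => (∑ i ∈ Finset.range (X ω), Y i ω) + W ω) P :=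
    hTint.add hWint
  -- the candidate is measurable w.r.t. σ(X)
  have hGm : Measurable[MeasurableSpace.comap X ⊤] (fun ω => a * (X ω : ℝ) + μW) := by
    have hX0 : Measurable[MeasurableSpace.comap X ⊤] X :=
      Measurable.of_comap_le (MeasurableSpace.comap_mono le_top)
    exact (((measurable_of_countable (fun n : ℕ => (n : ℝ))).comp hX0).const_mul a).add_const μW
  have hGint : Integrable (fun ω => a * (X ω : ℝ) + μW) P :=
    (hXint.const_mul a).add (integrable_const μW)
  refine (ae_eq_condExp_of_forall_setIntegral_eq hm0 hSint
    (fun s _ _ => hGint.integrableOn) ?_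
    (StronglyMeasurable.aestronglyMeasurable hGm.stronglyMeasurable)).symm
  rintro s ⟨B, -, rfl⟩ -
  have hsm : MeasurableSet (X ⁻¹' B) := hXmeas (B.to_countable.measurableSet)
  -- W part
  have hWpart : ∫ ω in X ⁻¹' B, W ω ∂P = (P (X ⁻¹' B)).toReal * μW := by
    rw [← integral_indicator hsm,
      indicator_mul_integral P hm0 hIndW ⟨B, trivial, rfl⟩
        (Measurable.of_comap_le le_rfl) hWint, hWmean]
  -- T part
  have hTpart : ∫ ω in X ⁻¹' B, (∑ i ∈ Finset.range (X ω), Y i ω) ∂P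
      = ∑' n : ℕ, (P (X ⁻¹' ({n} ∩ B))).toReal * (n * a) := by
    rw [← integral_indicator hsm]
    have hpt : (fun ω => (X ⁻¹' B).indicator
          (fun ω => ∑ i ∈ Finset.range (X ω), Y i ω) ω)
        = fun ω => ∑' n : ℕ, (X ⁻¹' ({n} ∩ B)).indicator
            (fun ω => ∑ i ∈ Finset.range n, Y i ω) ω := by
      funext ω
      rw [tsum_eq_single (X ω) ?_]
      · by_cases hB : X ω ∈ B
        · rw [Set.indicator_of_mem (show ω ∈ X ⁻¹' B from hB),
            Set.indicator_of_mem (show ω ∈ X ⁻¹' ({X ω} ∩ B) from ⟨rfl, hB⟩)]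
        · rw [Set.indicator_of_notMem (show ω ∉ X ⁻¹' B from hB),
            Set.indicator_of_notMem
              (show ω ∉ X ⁻¹' ({X ω} ∩ B) from fun h => hB h.2)]
      · intro n hn
        have hnm : ω ∉ X ⁻¹' ({n} ∩ B) := fun h => hn (h.1.symm ▸ rfl)
        exact Set.indicator_of_notMem hnm _
    rw [hpt]
    have hameas : ∀ n : ℕ, AEStronglyMeasurable
        (fun ω => (X ⁻¹' ({n} ∩ B)).indicator
          (fun ω => ∑ i ∈ Finset.range n, Y i ω) ω) P :=
      fun n => ((Finset.measurable_sum _ fun i _ => hYmeas i).indicator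
        (hXmeas (Set.to_countable _).measurableSet)).aestronglyMeasurable
    have hfin' : ∑' n : ℕ, ∫⁻ ω, ‖(X ⁻¹' ({n} ∩ B)).indicator
          (fun ω => ∑ i ∈ Finset.range n, Y i ω) ω‖₊ ∂P ≠ ⊤ := by
      refine ne_top_of_le_ne_top (hfin c) (ENNReal.tsum_le_tsum fun n => ?_)
      have heq : ∫⁻ ω, ‖(X ⁻¹' ({n} ∩ B)).indicator
            (fun ω => ∑ i ∈ Finset.range n, Y i ω) ω‖₊ ∂P
          = ∫⁻ ω, (X ⁻¹' ({n} ∩ B)).indicator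
            (fun ω => (‖∑ i ∈ Finset.range n, Y i ω‖₊ : ENNReal)) ω ∂P := by
        refine lintegral_congr fun ω => ?_
        by_cases h : ω ∈ X ⁻¹' ({n} ∩ B)
        · rw [Set.indicator_of_mem h, Set.indicator_of_mem h]
        · rw [Set.indicator_of_notMem h, Set.indicator_of_notMem h]; simp
      rw [heq]
      refine le_trans (hlkey n ({n} ∩ B)) ?_
      exact mul_le_mul_left
        (measure_mono (Set.preimage_mono Set.inter_subset_left)) _
    rw [integral_tsum hameas hfin']
    exact tsum_congr fun n => hkey n ({n} ∩ B)
  -- X part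
  have hXpart : ∫ ω in X ⁻¹' B, a * (X ω : ℝ) ∂P
      = ∑' n : ℕ, (P (X ⁻¹' ({n} ∩ B))).toReal * (n * a) := by
    rw [← integral_indicator hsm]
    have hpt : (fun ω => (X ⁻¹' B).indicator (fun ω => a * (X ω : ℝ)) ω)
        = fun ω => ∑' n : ℕ, (X ⁻¹' ({n} ∩ B)).indicator
            (fun _ => a * (n : ℝ)) ω := by
      funext ω
      rw [tsum_eq_single (X ω) ?_]
      · by_cases hB : X ω ∈ B
        · rw [Set.indicator_of_mem (show ω ∈ X ⁻¹' B from hB),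
            Set.indicator_of_mem (show ω ∈ X ⁻¹' ({X ω} ∩ B) from ⟨rfl, hB⟩)]
        · rw [Set.indicator_of_notMem (show ω ∉ X ⁻¹' B from hB),
            Set.indicator_of_notMem
              (show ω ∉ X ⁻¹' ({X ω} ∩ B) from fun h => hB h.2)]
      · intro n hn
        have hnm : ω ∉ X ⁻¹' ({n} ∩ B) := fun h => hn (h.1.symm ▸ rfl)
        exact Set.indicator_of_notMem hnm _
    rw [hpt]
    have hameas : ∀ n : ℕ, AEStronglyMeasurable
        (fun ω => (X ⁻¹' ({n} ∩ B)).indicator (fun _ => a * (n : ℝ)) ω) P :=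
      fun n => (measurable_const.indicator
        (hXmeas (Set.to_countable _).measurableSet)).aestronglyMeasurable
    have hfin' : ∑' n : ℕ, ∫⁻ ω, ‖(X ⁻¹' ({n} ∩ B)).indicator
          (fun _ => a * (n : ℝ)) ω‖₊ ∂P ≠ ⊤ := by
      refine ne_top_of_le_ne_top (hfin |a|) (ENNReal.tsum_le_tsum fun n => ?_)
      have heq : ∫⁻ ω, ‖(X ⁻¹' ({n} ∩ B)).indicator (fun _ => a * (n : ℝ)) ω‖₊ ∂P
          = ∫⁻ ω, (X ⁻¹' ({n} ∩ B)).indicator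
              (fun _ => (‖a * (n : ℝ)‖₊ : ENNReal)) ω ∂P := by
        refine lintegral_congr fun ω => ?_
        by_cases h : ω ∈ X ⁻¹' ({n} ∩ B)
        · rw [Set.indicator_of_mem h, Set.indicator_of_mem h]
        · rw [Set.indicator_of_notMem h, Set.indicator_of_notMem h]; simp
      rw [heq, lintegral_indicator (hXmeas (Set.to_countable _).measurableSet) _]
      rw [lintegral_const, Measure.restrict_apply MeasurableSet.univ, Set.univ_inter]
      have hn : (‖a * (n : ℝ)‖₊ : ENNReal) = ENNReal.ofReal ((n : ℝ) * |a|) := by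
        rw [← enorm_eq_nnnorm, ← ofReal_norm, Real.norm_eq_abs, abs_mul, Nat.abs_cast, mul_comm]
      rw [hn, mul_comm]
      exact mul_le_mul_left
        (measure_mono (Set.preimage_mono Set.inter_subset_left)) _
    rw [integral_tsum hameas hfin']
    refine tsum_congr fun n => ?_
    rw [integral_indicator_const (a * (n : ℝ))
      (hXmeas (Set.to_countable _).measurableSet), smul_eq_mul]
    rw [measureReal_def]; ring
  -- assemble
  have hL : ∫ ω in X ⁻¹' B, (a * (X ω : ℝ) + μW) ∂P
      = (∫ ω in X ⁻¹' B, a * (X ω : ℝ) ∂P) + (P (X ⁻¹' B)).toReal * μW := by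
    rw [integral_add ((hXint.const_mul a).integrableOn)
      ((integrable_const μW).integrableOn), setIntegral_const, smul_eq_mul, measureReal_def]
  have hR : ∫ ω in X ⁻¹' B, ((∑ i ∈ Finset.range (X ω), Y i ω) + W ω) ∂P
      = (∫ ω in X ⁻¹' B, (∑ i ∈ Finset.range (X ω), Y i ω) ∂P)
        + ∫ ω in X ⁻¹' B, W ω ∂P :=
    integral_add (hTint.integrableOn) (hWint.integrableOn)
  rw [hL, hR, hWpart, hTpart, hXpart]
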